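/- Let M ⊆ ℝ^{n−1} be open, let h = (h₁,…,hₙ) : M → ℝⁿ be continuously differentiable, let H(θ) = ∑_{i∈I} aᵢ hᵢ(θ)^{2βᵢ}, and assume: (i) there is c_h > 0 with H(θ) ≥ c_h for all θ ∈ M; (ii) for every θ ∈ M the n×n matrix A(θ), whose first column is (α₁h₁(θ),…,αₙhₙ(θ)) and whose (j+1)-st column is (∂h₁/∂θⱼ(θ),…,∂hₙ/∂θⱼ(θ)) for j = 1,…,n−1, is invertible. Define Φ on {(R,θ) : θ ∈ M, R + H(θ) > 0} by Φᵢ(R,θ) = hᵢ(θ) · (R + H(θ))^{−αᵢ/(2c)}. Then at every point (R,θ) with R ≥ 0 the Fréchet derivative of Φ is invertible; hence Φ is a local diffeomorphism at every such point, including points with R = 0 (the horizon). -/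

import Mathlib

open Finset

/-- `H(θ) = ∑_{i∈I} aᵢ hᵢ(θ)^{2βᵢ}`. -/
noncomputable def Hfun {m : ℕ} (α β : Fin (m + 1) → ℕ) (a : Fin (m + 1) → ℝ)
    (h : (Fin m → ℝ) → Fin (m + 1) → ℝ) (θ : Fin m → ℝ) : ℝ :=
  ∑ i ∈ univ.filter (fun i => 0 < α i), a i * (h θ i) ^ (2 * β i)

/-- The matrix `A(θ)` whose first column is `(α₁h₁(θ),…,αₙhₙ(θ))` and whose
`(j+1)`-st column is `(∂h₁/∂θⱼ(θ),…,∂hₙ/∂θⱼ(θ))`. -/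
noncomputable def Amat {m : ℕ} (α : Fin (m + 1) → ℕ)
    (h : (Fin m → ℝ) → Fin (m + 1) → ℝ) (θ : Fin m → ℝ) :
    Matrix (Fin (m + 1)) (Fin (m + 1)) ℝ :=
  Matrix.of fun i j =>
    Fin.cases ((α i : ℝ) * h θ i)
      (fun j' => fderiv ℝ (fun θ' => h θ' i) θ (Pi.single j' 1)) j

/-- The change of coordinates `Φᵢ(R,θ) = hᵢ(θ)(R + H(θ))^{−αᵢ/(2c)}` from the
intermediate compactification coordinates to the quasi-Poincaré coordinates. -/
noncomputable def PhiChange {m : ℕ} (α β : Fin (m + 1) → ℕ) (a : Fin (m + 1) → ℝ)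
    (c : ℕ) (h : (Fin m → ℝ) → Fin (m + 1) → ℝ)
    (Rθ : ℝ × (Fin m → ℝ)) : Fin (m + 1) → ℝ :=
  fun i => h Rθ.2 i * (Rθ.1 + Hfun α β a h Rθ.2) ^ (-(α i : ℝ) / (2 * (c : ℝ)))

/-- Under conditions (Dir2) and (Dir4), the change of coordinates
`C_{h,int→qP} = Φ` has invertible Fréchet derivative at every `(R,θ)` with
`R ≥ 0` and `θ ∈ M`, including points on the horizon `{R = 0}`; hence it is a
local diffeomorphism at every such point. -/
theorem changeOfCoordinates_fderiv_invertible
    {m : ℕ} (α β : Fin (m + 1) → ℕ) (a : Fin (m + 1) → ℝ) (c : ℕ)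
    (hα : ∃ i, 0 < α i) (hc : 0 < c)
    (hαβ : ∀ i, 0 < α i → α i * β i = c)
    (hβ0 : ∀ i, α i = 0 → β i = 0)
    (ha : ∀ i, 1 ≤ a i)
    (M : Set (Fin m → ℝ)) (hM : IsOpen M)
    (h : (Fin m → ℝ) → Fin (m + 1) → ℝ)
    (hh : ContDiffOn ℝ 1 h M)
    (c_h : ℝ) (hch : 0 < c_h)
    (hH : ∀ θ ∈ M, c_h ≤ Hfun α β a h θ)
    (hA : ∀ θ ∈ M, IsUnit (Amat α h θ)) :
    ∀ R : ℝ, 0 ≤ R → ∀ θ ∈ M,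
      ∃ e : (ℝ × (Fin m → ℝ)) ≃L[ℝ] (Fin (m + 1) → ℝ),
        HasFDerivAt (PhiChange α β a c h)
          (e : (ℝ × (Fin m → ℝ)) →L[ℝ] (Fin (m + 1) → ℝ)) (R, θ) := by
  intro R hR θ hθ
  have hθnb : M ∈ nhds θ := hM.mem_nhds hθ
  have hdiff : DifferentiableAt ℝ h θ :=
    ((hh.differentiableOn one_ne_zero).differentiableAt hθnb)
  set Dh : Fin (m + 1) → (Fin m → ℝ) →L[ℝ] ℝ :=
    fun i => fderiv ℝ (fun θ' => h θ' i) θ with hDhdef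
  have hDh : ∀ i, HasFDerivAt (fun θ' => h θ' i) (Dh i) θ := fun i =>
    (differentiableAt_pi.1 hdiff i).hasFDerivAt
  set u : ℝ := R + Hfun α β a h θ with hu
  have hupos : 0 < u := by have := hH θ hθ; rw [hu]; linarith
  set p : Fin (m + 1) → ℝ := fun i => -(α i : ℝ) / (2 * (c : ℝ)) with hp
  -- derivative of H
  set DH : (Fin m → ℝ) →L[ℝ] ℝ :=
    ∑ i ∈ univ.filter (fun i => 0 < α i),
      a i • ((((2 * β i : ℕ) : ℝ) * h θ i ^ (2 * β i - 1)) • Dh i) with hDHdef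
  have hHd : HasFDerivAt (Hfun α β a h) DH θ := by
    have : HasFDerivAt (fun θ' => ∑ i ∈ univ.filter (fun i => 0 < α i),
        a i * h θ' i ^ (2 * β i)) DH θ := by
      rw [hDHdef]
      apply HasFDerivAt.fun_sum
      intro i _
      exact ((hasDerivAt_pow (2 * β i) (h θ i)).comp_hasFDerivAt θ (hDh i)).const_mul (a i)
    exact this
  set U : (ℝ × (Fin m → ℝ)) →L[ℝ] ℝ :=
    ContinuousLinearMap.fst ℝ ℝ (Fin m → ℝ) +
      DH.comp (ContinuousLinearMap.snd ℝ ℝ (Fin m → ℝ)) with hUdef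
  have hUd : HasFDerivAt (fun q : ℝ × (Fin m → ℝ) => q.1 + Hfun α β a h q.2) U (R, θ) :=
    hasFDerivAt_fst.add (hHd.comp (R, θ) hasFDerivAt_snd : HasFDerivAt (Hfun α β a h ∘ Prod.snd) _ (R, θ))
  set L : (ℝ × (Fin m → ℝ)) →L[ℝ] (Fin (m + 1) → ℝ) :=
    ContinuousLinearMap.pi (fun i =>
      h θ i • ((p i * u ^ (p i - 1)) • U) +
        u ^ p i • ((Dh i).comp (ContinuousLinearMap.snd ℝ ℝ (Fin m → ℝ)))) with hLdef
  have hLd : HasFDerivAt (PhiChange α β a c h) L (R, θ) := by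
    apply hasFDerivAt_pi'.2
    intro i
    rw [hLdef, ContinuousLinearMap.proj_pi]
    have hci : HasFDerivAt (fun q : ℝ × (Fin m → ℝ) => h q.2 i)
        ((Dh i).comp (ContinuousLinearMap.snd ℝ ℝ (Fin m → ℝ))) (R, θ) :=
      ((hDh i).comp (R, θ) hasFDerivAt_snd : HasFDerivAt ((fun θ' => h θ' i) ∘ Prod.snd) _ (R, θ))
    have hui : HasFDerivAt (fun q : ℝ × (Fin m → ℝ) => (q.1 + Hfun α β a h q.2) ^ (p i))
        ((p i * u ^ (p i - 1)) • U) (R, θ) :=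
      hUd.rpow_const (Or.inl hupos.ne')
    exact hci.mul hui
  -- injectivity
  have hcne : ((c : ℝ)) ≠ 0 := Nat.cast_ne_zero.mpr hc.ne'
  have hune : u ≠ 0 := hupos.ne'
  have hzero : ∀ v : ℝ × (Fin m → ℝ), L v = 0 → v = 0 := by
    intro v hv
    set s : ℝ := -(U v) / (2 * (c : ℝ) * u) with hsdef
    have key : ∀ i, (α i : ℝ) * h θ i * s + Dh i v.2 = 0 := by
      intro i
      have hi : h θ i * ((p i * u ^ (p i - 1)) * U v) + u ^ p i * Dh i v.2 = 0 := by
        have := congrFun hv i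
        simpa [hLdef, ContinuousLinearMap.pi_apply, ContinuousLinearMap.add_apply,
          ContinuousLinearMap.smul_apply, ContinuousLinearMap.comp_apply,
          smul_eq_mul, mul_assoc] using this
      have hup : u ^ (p i - 1) = u ^ p i / u := by
        rw [Real.rpow_sub hupos, Real.rpow_one]
      have hupne : u ^ p i ≠ 0 := (Real.rpow_pos_of_pos hupos _).ne'
      have h5 : u ^ p i * (h θ i * (p i * U v) / u + Dh i v.2) = 0 := by
        rw [← hi, hup]
        field_simp
      have h3 : h θ i * (p i * U v) / u + Dh i v.2 = 0 := by
        rcases mul_eq_zero.mp h5 with h6 | h6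
        · exact absurd h6 hupne
        · exact h6
      have h4 : (α i : ℝ) * h θ i * s = h θ i * (p i * U v) / u := by
        rw [hsdef]
        simp only [hp]
        field_simp
      rw [h4]
      exact h3
    have hv2sum : v.2 = ∑ j, v.2 j • (Pi.single j 1 : Fin m → ℝ) := by
      funext k
      rw [Finset.sum_apply]
      simp [Pi.single_apply, mul_ite]
    have hAw : (Amat α h θ).mulVec (Fin.cons s v.2) = 0 := by
      funext i
      have hsum : ∑ j, fderiv ℝ (fun θ' => h θ' i) θ (Pi.single j 1) * v.2 j
          = Dh i v.2 := by
        simp only [hDhdef]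
        conv_rhs => rw [hv2sum]
        rw [map_sum]
        exact Finset.sum_congr rfl fun j _ => by rw [map_smul, smul_eq_mul, mul_comm]
      rw [Matrix.mulVec, dotProduct, Fin.sum_univ_succ]
      simp only [Amat, Matrix.of_apply, Fin.cases_zero, Fin.cases_succ,
        Fin.cons_zero, Fin.cons_succ, Pi.zero_apply]
      rw [hsum]
      exact key i
    have hw0 : Fin.cons s v.2 = (0 : Fin (m + 1) → ℝ) := by
      have hinj := Matrix.mulVec_injective_iff_isUnit.mpr (hA θ hθ)
      apply hinj
      rw [hAw, Matrix.mulVec_zero]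
    have hs0 : s = 0 := by simpa using congrFun hw0 0
    have hv2 : v.2 = 0 := by
      funext j
      simpa using congrFun hw0 j.succ
    have hUv0 : U v = 0 := by
      have h2cu : (2 * (c : ℝ) * u) ≠ 0 := by
        apply mul_ne_zero _ hune
        simpa using hcne
      have := hs0
      rw [hsdef, div_eq_zero_iff, neg_eq_zero] at this
      rcases this with h1 | h2
      · exact h1
      · exact absurd h2 h2cu
    have hv1 : v.1 = 0 := by
      have : U v = v.1 + DH v.2 := by
        simp [hUdef, ContinuousLinearMap.add_apply, ContinuousLinearMap.comp_apply]
      rw [hv2, map_zero, add_zero] at this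
      rw [← this, hUv0]
    exact Prod.ext hv1 hv2
  have hLinj : Function.Injective L := by
    intro x y hxy
    have : L (x - y) = 0 := by rw [map_sub, hxy, sub_self]
    have := hzero _ this
    exact sub_eq_zero.mp this
  have hfr : Module.finrank ℝ (ℝ × (Fin m → ℝ)) = Module.finrank ℝ (Fin (m + 1) → ℝ) := by
    have h1 : Module.finrank ℝ (ℝ × (Fin m → ℝ)) = 1 + m := by simp
    have h2 : Module.finrank ℝ (Fin (m + 1) → ℝ) = m + 1 := by simp
    omega
  have hLsurj : Function.Surjective L :=
    (LinearMap.injective_iff_surjective_of_finrank_eq_finrank hfr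
      (f := (L : (ℝ × (Fin m → ℝ)) →ₗ[ℝ] (Fin (m + 1) → ℝ)))).mp hLinj
  let e := (LinearEquiv.ofBijective (L : (ℝ × (Fin m → ℝ)) →ₗ[ℝ] (Fin (m + 1) → ℝ))
    ⟨hLinj, hLsurj⟩).toContinuousLinearEquiv
  refine ⟨e, ?_⟩
  have : (e : (ℝ × (Fin m → ℝ)) →L[ℝ] (Fin (m + 1) → ℝ)) = L :=
    ContinuousLinearMap.ext fun v => rfl
  rw [this]
  exact hLd
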